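/- Let A = (Σ, Q, δ) be a circular semi-automaton with n states. If sc(Syn(A)) = 2^n - n, then A is completely reachable. -/

import Mathlib

open Finset

universe u v

variable {Q : Type u} {A : Type v}

/-- Extended transition function on words (lists of letters). -/
def dw (δ : Q → A → Q) (q : Q) (w : List A) : Q := w.foldl δ q

/-- A subset `S` of the state set is reachable if it is the image of the
full state set under some word. -/
def reach [Fintype Q] [DecidableEq Q] (δ : Q → A → Q) (S : Finset Q) : Prop :=
  ∃ w : List A, Finset.univ.image (fun q => dw δ q w) = S

/-- Rank of a word: cardinality of the image of the state set under it. -/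
def rkw [Fintype Q] [DecidableEq Q] (δ : Q → A → Q) (w : List A) : ℕ :=
  (Finset.univ.image (fun q => dw δ q w)).card

/-- Rank of a letter. -/
def rkl [Fintype Q] [DecidableEq Q] (δ : Q → A → Q) (a : A) : ℕ :=
  (Finset.univ.image (fun q => δ q a)).card

/-- A map is a cyclic permutation with a single orbit. -/
def isCyclicPerm (f : Q → Q) : Prop :=
  Function.Bijective f ∧ ∀ p q : Q, ∃ k : ℕ, f^[k] p = q

/-- Two subsets of states are distinguishable in the power automaton:
some word maps exactly one of them to a singleton. -/
def distinguishable [DecidableEq Q] (δ : Q → A → Q) (S T : Finset Q) : Prop :=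
  ∃ u : List A,
    Xor' ((S.image (fun q => dw δ q u)).card = 1)
         ((T.image (fun q => dw δ q u)).card = 1)

/-- The set of synchronizing words. -/
def Syn [Fintype Q] [DecidableEq Q] (δ : Q → A → Q) : Set (List A) :=
  {w | (Finset.univ.image (fun q => dw δ q w)).card = 1}

/-- The Nerode right-congruence of a language. -/
def nerode (L : Set (List A)) : Setoid (List A) where
  r u v := ∀ x : List A, u ++ x ∈ L ↔ v ++ x ∈ L
  iseqv := ⟨fun _ _ => Iff.rfl, fun h x => (h x).symm, fun h1 h2 x => (h1 x).trans (h2 x)⟩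

/-- State complexity of a language: number of Nerode classes. -/
noncomputable def sc (L : Set (List A)) : ℕ := Nat.card (Quotient (nerode L))

/-- Complete reachability. -/
def complReach [Fintype Q] [DecidableEq Q] (δ : Q → A → Q) : Prop :=
  ∀ S : Finset Q, S.Nonempty → ∃ w : List A, Finset.univ.image (fun q => dw δ q w) = S

/-- The permutation group generated by the permutational letters. -/
def permGroup [Fintype Q] [DecidableEq Q] (δ : Q → A → Q) : Subgroup (Equiv.Perm Q) :=
  Subgroup.closure {π : Equiv.Perm Q | ∃ a : A, ∀ q : Q, π q = δ q a}


lemma dw_append (δ : Q → A → Q) (q : Q) (u v : List A) :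
    dw δ q (u ++ v) = dw δ (dw δ q u) v :=
  List.foldl_append ..

lemma dw_replicate (δ : Q → A → Q) (c : A) (k : ℕ) (q : Q) :
    dw δ q (List.replicate k c) = (fun x => δ x c)^[k] q := by
  induction k generalizing q with
  | zero => rfl
  | succ k ih =>
      rw [List.replicate_succ]
      show dw δ (δ q c) (List.replicate k c) = _
      rw [ih, ← Function.iterate_succ_apply]

/-- image of the full state set under a word. -/
def gimg [Fintype Q] [DecidableEq Q] (δ : Q → A → Q) (u : List A) : Finset Q :=
  Finset.univ.image (fun q => dw δ q u)

lemma gimg_append [Fintype Q] [DecidableEq Q] (δ : Q → A → Q) (u x : List A) :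
    gimg δ (u ++ x) = (gimg δ u).image (fun q => dw δ q x) := by
  unfold gimg
  rw [Finset.image_image]
  apply Finset.image_congr
  intro q _
  exact dw_append δ q u x

lemma syn_all [Fintype Q] [DecidableEq Q] (δ : Q → A → Q) {u : List A}
    (hu : (gimg δ u).card = 1) (x : List A) : (u ++ x) ∈ Syn δ := by
  obtain ⟨p, hp⟩ := Finset.card_eq_one.mp hu
  show (gimg δ (u ++ x)).card = 1
  rw [gimg_append, hp, Finset.image_singleton, Finset.card_singleton]

lemma nerode_of_gimg_eq [Fintype Q] [DecidableEq Q] (δ : Q → A → Q) {u v : List A}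
    (h : gimg δ u = gimg δ v) : (nerode (Syn δ)).r u v := by
  intro x
  show (gimg δ (u ++ x)).card = 1 ↔ (gimg δ (v ++ x)).card = 1
  rw [gimg_append, gimg_append, h]

lemma two_pow_aux (n : ℕ) (hh : 2 ≤ n) : n + 2 ≤ 2 ^ n := by
  induction n with
  | zero => omega
  | succ k ih =>
      rcases Nat.lt_or_ge k 2 with hk | hk
      · interval_cases k <;> simp_all <;> omega
      · have := ih hk
        have : 2 ^ (k + 1) = 2 * 2 ^ k := by ring
        omega

theorem complReach_of_circular_sc_max [Fintype Q] [DecidableEq Q]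
    (δ : Q → A → Q) (n : ℕ) (hn : Fintype.card Q = n)
    (hb : ∃ c : A, isCyclicPerm (fun q => δ q c))
    (h : sc (Syn δ) = 2 ^ n - n) :
    complReach δ := by
  classical
  intro S hS
  by_cases hn2 : n ≤ 1
  · -- tiny case: S must be the whole state set
    have hc1 : S.card ≤ Fintype.card Q := Finset.card_le_univ S
    have hc2 : 1 ≤ S.card := Finset.card_pos.mpr hS
    have hSu : S = Finset.univ := Finset.eq_univ_of_card S (by omega)
    exact ⟨[], by simpa [dw] using hSu.symm⟩
  push_neg at hn2
  have hn2' : 2 ≤ n := hn2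
  have hpow : n + 2 ≤ 2 ^ n := two_pow_aux n hn2'
  have hscpos : 0 < sc (Syn δ) := by rw [h]; omega
  have hfin : Finite (Quotient (nerode (Syn δ))) := (Nat.card_pos_iff.mp hscpos).2
  letI := Fintype.ofFinite (Quotient (nerode (Syn δ)))
  -- there is a synchronizing word
  have hsyn : ∃ w, (gimg δ w).card = 1 := by
    by_contra hcon
    push_neg at hcon
    have hall : ∀ u v : List A, (nerode (Syn δ)).r u v := by
      intro u v x
      constructor <;> intro hx <;> exact absurd hx (hcon _)
    have hss : Subsingleton (Quotient (nerode (Syn δ))) :=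
      ⟨fun a b => by
        induction a using Quotient.ind
        induction b using Quotient.ind
        exact Quot.sound (hall _ _)⟩
    have h1 : sc (Syn δ) ≤ 1 := by
      unfold sc
      have := @Nat.card_of_subsingleton _ (Quotient.mk (nerode (Syn δ)) ([] : List A)) hss
      omega
    rw [h] at h1
    omega
  obtain ⟨w0, hw0⟩ := hsyn
  obtain ⟨p, hp⟩ := Finset.card_eq_one.mp hw0
  obtain ⟨c, hc⟩ := hb
  -- every singleton is reachable
  have hsing : ∀ q : Q, reach δ ({q} : Finset Q) := by
    intro q
    obtain ⟨k, hk⟩ := hc.2 p q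
    refine ⟨w0 ++ List.replicate k c, ?_⟩
    have : gimg δ (w0 ++ List.replicate k c) = {q} := by
      rw [gimg_append, hp, Finset.image_singleton, dw_replicate, hk]
    simpa [gimg] using this
  set R : Finset (Finset Q) := Finset.univ.filter (fun T => reach δ T) with hR
  set Sing : Finset (Finset Q) := Finset.univ.image (fun q : Q => ({q} : Finset Q)) with hSg
  have hSingR : Sing ⊆ R := by
    intro T hT
    rw [hSg, Finset.mem_image] at hT
    obtain ⟨q, -, rfl⟩ := hT
    rw [hR, Finset.mem_filter]
    exact ⟨Finset.mem_univ _, hsing q⟩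
  have hSingcard : Sing.card = n := by
    rw [hSg, Finset.card_image_of_injective _ Finset.singleton_injective,
      Finset.card_univ, hn]
  set c0 : Quotient (nerode (Syn δ)) := Quotient.mk (nerode (Syn δ)) w0 with hc0
  -- injection from nonsynchronizing Nerode classes into reachable non-singletons
  have hinj : ((Finset.univ : Finset (Quotient (nerode (Syn δ)))).erase c0).card
      ≤ (R \ Sing).card := by
    apply Finset.card_le_card_of_injOn (fun t => gimg δ t.out)
    · intro t ht
      have htne : t ≠ c0 := Finset.ne_of_mem_erase ht
      have hcard : (gimg δ t.out).card ≠ 1 := by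
        intro hc1
        apply htne
        rw [← Quotient.out_eq t, hc0]
        refine Quot.sound ?_
        intro x
        constructor <;> intro _
        · exact syn_all δ hw0 x
        · exact syn_all δ hc1 x
      rw [Finset.mem_coe, Finset.mem_sdiff]
      constructor
      · rw [hR, Finset.mem_filter]
        exact ⟨Finset.mem_univ _, ⟨t.out, rfl⟩⟩
      · intro hmem
        rw [hSg, Finset.mem_image] at hmem
        obtain ⟨q, -, hq⟩ := hmem
        exact hcard (by rw [← show ({q} : Finset Q) = gimg δ t.out from hq]; simp)
    · intro t1 _ t2 _ heq
      rw [← Quotient.out_eq t1, ← Quotient.out_eq t2]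
      exact Quot.sound (nerode_of_gimg_eq δ heq)
  have hscfin : Fintype.card (Quotient (nerode (Syn δ))) = 2 ^ n - n := by
    have h' := h
    unfold sc at h'
    rwa [Nat.card_eq_fintype_card] at h'
  have herase : ((Finset.univ : Finset (Quotient (nerode (Syn δ)))).erase c0).card
      = 2 ^ n - n - 1 := by
    rw [Finset.card_erase_of_mem (Finset.mem_univ c0), Finset.card_univ, hscfin]
  have hsplit : (R \ Sing).card + Sing.card = R.card :=
    Finset.card_sdiff_add_card_eq_card hSingR
  have hRcard : 2 ^ n - 1 ≤ R.card := by omega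
  have hQne : Nonempty Q := by
    rw [← Fintype.card_pos_iff, hn]; omega
  set U : Finset (Finset Q) := Finset.univ.filter (fun T : Finset Q => T.Nonempty) with hU
  have hRU : R ⊆ U := by
    intro T hT
    rw [hR, Finset.mem_filter] at hT
    obtain ⟨-, w, hw⟩ := hT
    rw [hU, Finset.mem_filter]
    exact ⟨Finset.mem_univ _, hw ▸ Finset.univ_nonempty.image _⟩
  have hUcard : U.card = 2 ^ n - 1 := by
    have key : U = (Finset.univ : Finset (Finset Q)).erase ∅ := by
      ext T
      simp [hU, Finset.mem_erase, Finset.nonempty_iff_ne_empty, and_comm]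
    rw [key, Finset.card_erase_of_mem (Finset.mem_univ _), Finset.card_univ,
      Fintype.card_finset, hn]
  have hRUeq : R = U := Finset.eq_of_subset_of_card_le hRU (by omega)
  have hSR : S ∈ R := by
    rw [hRUeq, hU, Finset.mem_filter]
    exact ⟨Finset.mem_univ _, hS⟩
  rw [hR, Finset.mem_filter] at hSR
  exact hSR.2
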